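/- For every positive integer n, n! / ((n/2)!)² ≤ 2^n / √(π n / 2), where (n/2)! denotes Γ(n/2 + 1). -/
import Mathlib

open Real

lemma gamma_key {x : ℝ} (hx : 0 < x) :
    Real.Gamma (x + 1/2) * Real.sqrt x ≤ Real.Gamma (x + 1) := by
  have hx1 : (0:ℝ) < x + 1 := by linarith
  have hΓx : 0 < Real.Gamma x := Real.Gamma_pos_of_pos hx
  have hΓx1 : 0 < Real.Gamma (x+1) := Real.Gamma_pos_of_pos hx1
  have hΓh : 0 < Real.Gamma (x+1/2) := Real.Gamma_pos_of_pos (by linarith)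
  have hconv := Real.convexOn_log_Gamma.2 (Set.mem_Ioi.2 hx) (Set.mem_Ioi.2 hx1)
    (by norm_num : (0:ℝ) ≤ 1/2) (by norm_num : (0:ℝ) ≤ 1/2) (by norm_num)
  simp only [smul_eq_mul, Function.comp] at hconv
  have hmid : (1/2 : ℝ) * x + (1/2 : ℝ) * (x+1) = x + 1/2 := by ring
  rw [hmid] at hconv
  have hsq : Real.Gamma (x+1/2)^2 ≤ Real.Gamma x * Real.Gamma (x+1) := by
    rw [← Real.log_le_log_iff (by positivity) (by positivity), Real.log_pow,
      Real.log_mul hΓx.ne' hΓx1.ne']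
    push_cast
    linarith
  have hgadd : Real.Gamma (x+1) = x * Real.Gamma x := Real.Gamma_add_one hx.ne'
  have h2 : (Real.Gamma (x+1/2) * Real.sqrt x)^2 ≤ Real.Gamma (x+1)^2 := by
    have hs : Real.sqrt x ^ 2 = x := Real.sq_sqrt hx.le
    calc (Real.Gamma (x+1/2) * Real.sqrt x)^2 = Real.Gamma (x+1/2)^2 * x := by
          rw [mul_pow, hs]
      _ ≤ Real.Gamma x * Real.Gamma (x+1) * x := by nlinarith
      _ = Real.Gamma (x+1)^2 := by rw [hgadd]; ring
  have hln : 0 ≤ Real.Gamma (x+1/2) * Real.sqrt x := by positivity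
  nlinarith [h2, hln, hΓx1]

theorem stmt_12 (n : ℕ) (hn : 0 < n) :
    (Nat.factorial n : ℝ) / Real.Gamma ((n : ℝ) / 2 + 1) ^ 2
      ≤ 2 ^ n / Real.sqrt (Real.pi * n / 2) := by
  have hnp : (0:ℝ) < n := by exact_mod_cast hn
  have hπ := Real.pi_pos
  have hdup := Real.Gamma_mul_Gamma_add_half (((n:ℝ)+1)/2)
  have hA : ((n:ℝ)+1)/2 + 1/2 = (n:ℝ)/2 + 1 := by ring
  have hB : 2 * (((n:ℝ)+1)/2) = (n:ℝ)+1 := by ring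
  have hC : (1:ℝ) - ((n:ℝ)+1) = -(n:ℝ) := by ring
  rw [hA, hB, hC] at hdup
  have hrpow : (2:ℝ) ^ (-(n:ℝ)) = ((2:ℝ)^n)⁻¹ := by
    rw [Real.rpow_neg (by norm_num), Real.rpow_natCast]
  rw [hrpow] at hdup
  have hfact : Real.Gamma ((n:ℝ)+1) = n.factorial := by
    have := Real.Gamma_nat_eq_factorial n
    rw [← this]
  rw [hfact] at hdup
  -- hdup : Γ((n+1)/2) * Γ(n/2+1) = n! * (2^n)⁻¹ * √π
  have hkey := gamma_key (x := (n:ℝ)/2) (by positivity)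
  have hA2 : (n:ℝ)/2 + 1/2 = ((n:ℝ)+1)/2 := by ring
  rw [hA2] at hkey
  -- hkey : Γ((n+1)/2) * √(n/2) ≤ Γ(n/2+1)
  have hΓ1 : 0 < Real.Gamma ((n:ℝ)/2 + 1) := Real.Gamma_pos_of_pos (by positivity)
  have hΓ2 : 0 < Real.Gamma (((n:ℝ)+1)/2) := Real.Gamma_pos_of_pos (by positivity)
  have hsπ : 0 < Real.sqrt π := Real.sqrt_pos.2 hπ
  have hs2 : 0 < Real.sqrt ((n:ℝ)/2) := Real.sqrt_pos.2 (by positivity)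
  have h2n : (0:ℝ) < 2^n := by positivity
  have hsplit : Real.sqrt (π * n / 2) = Real.sqrt π * Real.sqrt ((n:ℝ)/2) := by
    rw [← Real.sqrt_mul hπ.le]
    ring_nf
  rw [hsplit, div_le_div_iff₀ (by positivity) (by positivity)]
  have hfacteq : (n.factorial : ℝ) = Real.Gamma (((n:ℝ)+1)/2) * Real.Gamma ((n:ℝ)/2+1) * 2^n / Real.sqrt π := by
    field_simp at hdup ⊢
    nlinarith [hdup, Real.sq_sqrt hπ.le, hsπ]
  rw [hfacteq]
  rw [div_mul_eq_mul_div, div_le_iff₀ hsπ]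
  have : Real.Gamma (((n:ℝ)+1)/2) * Real.sqrt ((n:ℝ)/2) * (Real.Gamma ((n:ℝ)/2+1) * 2^n * Real.sqrt π)
      ≤ Real.Gamma ((n:ℝ)/2+1) * (Real.Gamma ((n:ℝ)/2+1) * 2^n * Real.sqrt π) := by
    apply mul_le_mul_of_nonneg_right hkey (by positivity)
  nlinarith [this]
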